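/- Let C be a GCM of rank 2 with c_{12} c_{21} = 1 (type A_2), with symmetrizer D = diag(d_1, d_2) = diag(d, d). Define operators T_1, T_2 on the free module over ℤ[q^{±1}, t^{±1}, μ^{±1}] with basis α_1, α_2 by T_i α_i = -q^{-2d} t^2 α_i, T_1 α_2 = α_2 + q^{-d} t μ α_1, T_2 α_1 = α_1 + q^{-d} t μ^{-1} α_2. Then T_1 T_2 T_1 = T_2 T_1 T_2. -/

import Mathlib

/-- Braid relation `T₁T₂T₁ = T₂T₁T₂` in type `A₂` (i.e. `c₁₂ c₂₁ = 1`) with symmetrizer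
`diag(d, d)`, for the deformed reflections `T_i α_i = −q^{-2d} t² α_i`,
`T₁ α₂ = α₂ + q^{-d} t μ α₁`, `T₂ α₁ = α₁ + q^{-d} t μ⁻¹ α₂`, written as matrices in the
basis `(α₁, α₂)`. -/
theorem stmt_4 {R : Type*} [CommRing R] (q t μ : Rˣ) (d : ℕ) (hd : 0 < d) :
    (!![-(((q⁻¹ : Rˣ) : R) ^ (2 * d) * (t : R) ^ 2), ((q⁻¹ : Rˣ) : R) ^ d * (t : R) * (μ : R);
        0, 1] *
     !![(1 : R), 0;
        ((q⁻¹ : Rˣ) : R) ^ d * (t : R) * ((μ⁻¹ : Rˣ) : R),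
          -(((q⁻¹ : Rˣ) : R) ^ (2 * d) * (t : R) ^ 2)] *
     !![-(((q⁻¹ : Rˣ) : R) ^ (2 * d) * (t : R) ^ 2), ((q⁻¹ : Rˣ) : R) ^ d * (t : R) * (μ : R);
        0, 1])
    =
    (!![(1 : R), 0;
        ((q⁻¹ : Rˣ) : R) ^ d * (t : R) * ((μ⁻¹ : Rˣ) : R),
          -(((q⁻¹ : Rˣ) : R) ^ (2 * d) * (t : R) ^ 2)] *
     !![-(((q⁻¹ : Rˣ) : R) ^ (2 * d) * (t : R) ^ 2), ((q⁻¹ : Rˣ) : R) ^ d * (t : R) * (μ : R);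
        0, 1] *
     !![(1 : R), 0;
        ((q⁻¹ : Rˣ) : R) ^ d * (t : R) * ((μ⁻¹ : Rˣ) : R),
          -(((q⁻¹ : Rˣ) : R) ^ (2 * d) * (t : R) ^ 2)]) := by
  have hμ : ((μ⁻¹ : Rˣ) : R) * (μ : R) = 1 := by
    rw [← Units.val_mul, inv_mul_cancel, Units.val_one]
  have hμ' : (μ : R) * ((μ⁻¹ : Rˣ) : R) = 1 := by
    rw [← Units.val_mul, mul_inv_cancel, Units.val_one]
  ext i j
  fin_cases i <;> fin_cases j <;>
    simp [Matrix.mul_apply, Fin.sum_univ_two, two_mul, pow_add] <;> ring_nf <;>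
    simp [pow_two, mul_assoc, mul_comm, mul_left_comm, hμ, hμ']
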